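/- Let U ⊆ ℝ² be open, ε > 0, and let v ∈ C^∞(U) satisfy Δ∞v + ε Δv = 0 at every point of U. Let β > −1 and δ > 0, and define G_δ : U → ℝ² by G_δ(x) = (|Dv(x)|² + δ)^{β/2} Dv(x). Then at every point of U: −det DG_δ ≥ (1/(β+1)) |D((|Dv|² + δ)^{(β+1)/2})|² + ((β+1)/ε) (|Dv|² + δ)^{β−1} (Δ∞v)². -/

import Mathlib

open Real MeasureTheory
open scoped RealInnerProductSpace

noncomputable section

/-- The Euclidean plane ℝ². -/
abbrev E2 : Type := EuclideanSpace ℝ (Fin 2)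

/-- Standard basis vector. -/
def ee (i : Fin 2) : E2 := EuclideanSpace.single i (1 : ℝ)

/-- Partial derivative ∂ᵢf. -/
def pd (i : Fin 2) (f : E2 → ℝ) (x : E2) : ℝ := fderiv ℝ f x (ee i)

/-- Second partial derivative ∂ᵢ∂ⱼf. -/
def pd2 (i j : Fin 2) (f : E2 → ℝ) (x : E2) : ℝ := pd i (pd j f) x

/-- |Df|², squared Euclidean norm of the gradient. -/
def gradSq (f : E2 → ℝ) (x : E2) : ℝ := (pd 0 f x) ^ 2 + (pd 1 f x) ^ 2

/-- |Df|, Euclidean norm of the gradient. -/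
def gradNorm (f : E2 → ℝ) (x : E2) : ℝ := Real.sqrt (gradSq f x)

/-- Laplacian Δf = tr D²f. -/
def lap (f : E2 → ℝ) (x : E2) : ℝ := pd2 0 0 f x + pd2 1 1 f x

/-- ∞-Laplacian Δ∞f = D²f Df · Df. -/
def infLap (f : E2 → ℝ) (x : E2) : ℝ :=
  pd2 0 0 f x * pd 0 f x * pd 0 f x + pd2 0 1 f x * pd 0 f x * pd 1 f x +
  pd2 1 0 f x * pd 1 f x * pd 0 f x + pd2 1 1 f x * pd 1 f x * pd 1 f x

/-- |D²f|², squared Frobenius norm of the Hessian. -/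
def hessFrobSq (f : E2 → ℝ) (x : E2) : ℝ :=
  (pd2 0 0 f x) ^ 2 + (pd2 0 1 f x) ^ 2 + (pd2 1 0 f x) ^ 2 + (pd2 1 1 f x) ^ 2

/-- det D²f, determinant of the Hessian. -/
def detHess (f : E2 → ℝ) (x : E2) : ℝ :=
  pd2 0 0 f x * pd2 1 1 f x - pd2 0 1 f x * pd2 1 0 f x

/-- |D²f Df|². -/
def hessGradSq (f : E2 → ℝ) (x : E2) : ℝ :=
  (pd2 0 0 f x * pd 0 f x + pd2 0 1 f x * pd 1 f x) ^ 2 +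
  (pd2 1 0 f x * pd 0 f x + pd2 1 1 f x * pd 1 f x) ^ 2

/-- Jacobian determinant of the planar map with components `F 0`, `F 1`. -/
def jdet (F : Fin 2 → E2 → ℝ) (x : E2) : ℝ :=
  pd 0 (F 0) x * pd 1 (F 1) x - pd 1 (F 0) x * pd 0 (F 1) x

/-- Squared Frobenius norm of the Jacobian of the planar map with components `F 0`, `F 1`. -/
def jFrobSq (F : Fin 2 → E2 → ℝ) (x : E2) : ℝ :=
  (pd 0 (F 0) x) ^ 2 + (pd 1 (F 0) x) ^ 2 + (pd 0 (F 1) x) ^ 2 + (pd 1 (F 1) x) ^ 2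

/-- Df · Dg. -/
def gradDot (f g : E2 → ℝ) (x : E2) : ℝ :=
  pd 0 f x * pd 0 g x + pd 1 f x * pd 1 g x

/-- D²ψ Dv · Dv. -/
def hessQuad (ψ v : E2 → ℝ) (x : E2) : ℝ :=
  pd2 0 0 ψ x * pd 0 v x * pd 0 v x + pd2 0 1 ψ x * pd 0 v x * pd 1 v x +
  pd2 1 0 ψ x * pd 1 v x * pd 0 v x + pd2 1 1 ψ x * pd 1 v x * pd 1 v x

/-- (D²v Dv) · Dψ. -/
def hessGradDot (v ψ : E2 → ℝ) (x : E2) : ℝ :=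
  (pd2 0 0 v x * pd 0 v x + pd2 0 1 v x * pd 1 v x) * pd 0 ψ x +
  (pd2 1 0 v x * pd 0 v x + pd2 1 1 v x * pd 1 v x) * pd 1 ψ x

/-- Smooth compactly supported test function on Ω. -/
def IsTestOn (ψ : E2 → ℝ) (Ω : Set E2) : Prop :=
  ContDiff ℝ (⊤ : ℕ∞) ψ ∧ HasCompactSupport ψ ∧ tsupport ψ ⊆ Ω

/-- Components of W = |Dv|⁻¹ Dv. -/
def Wcomp (v : E2 → ℝ) (i : Fin 2) : E2 → ℝ := fun y => (gradNorm v y)⁻¹ * pd i v y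


lemma aux_det_nonpos (ε p0 p1 a b c : ℝ) (hε : 0 < ε)
    (h : a*p0*p0 + b*p0*p1 + b*p1*p0 + c*p1*p1 + ε*(a+c) = 0) : a*c - b*b ≤ 0 := by
  by_contra hd
  push_neg at hd
  have key1 : (a*c-b*b)*p1^2 + (a*p0+b*p1)^2 = ε*(-(a*(a+c))) := by linear_combination a * h
  have key2 : (a*c-b*b)*p0^2 + (b*p0+c*p1)^2 = ε*(-(c*(a+c))) := by linear_combination c * h
  have h3 : 0 ≤ (a*c-b*b)*p1^2 := mul_nonneg hd.le (sq_nonneg _)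
  have h4 : 0 ≤ (a*c-b*b)*p0^2 := mul_nonneg hd.le (sq_nonneg _)
  have h6 : (a+c)^2 ≤ 0 := by
    nlinarith [key1, key2, h3, h4, sq_nonneg (a*p0+b*p1), sq_nonneg (b*p0+c*p1)]
  have h5 : a + c = 0 := by nlinarith [sq_nonneg (a+c)]
  nlinarith [sq_nonneg a, sq_nonneg b]

set_option maxHeartbeats 2000000 in
/-- pointwise lower bound for −det DG_δ along solutions of the
regularized ∞-Laplace equation Δ∞v + εΔv = 0. -/
theorem stmt_14 (U : Set E2) (hU : IsOpen U) (ε : ℝ) (hε : 0 < ε)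
    (v : E2 → ℝ) (hv : ContDiffOn ℝ (⊤ : ℕ∞) v U)
    (heq : ∀ x ∈ U, infLap v x + ε * lap v x = 0)
    (β : ℝ) (hβ : -1 < β) (δ : ℝ) (hδ : 0 < δ) :
    ∀ x ∈ U,
      (1/(β+1)) * ((pd 0 (fun y => (gradSq v y + δ) ^ ((β+1)/2)) x) ^ 2
            + (pd 1 (fun y => (gradSq v y + δ) ^ ((β+1)/2)) x) ^ 2)
        + ((β+1)/ε) * (gradSq v x + δ) ^ (β-1) * (infLap v x) ^ 2
      ≤ -jdet (fun i y => (gradSq v y + δ) ^ (β/2) * pd i v y) x := by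
  intro x hx
  have hUx : U ∈ nhds x := hU.mem_nhds hx
  have hsm : ContDiffAt ℝ (⊤ : ℕ∞) v x := hv.contDiffAt hUx
  have hf1 : ∀ᶠ y in nhds x, HasFDerivAt v (fderiv ℝ v y) y := by
    filter_upwards [hU.mem_nhds hx] with y hy
    exact ((hv.differentiableOn (by simp) y hy).differentiableAt
      (hU.mem_nhds hy)).hasFDerivAt
  have hf2' : ContDiffAt ℝ 1 (fderiv ℝ v) x := hsm.fderiv_right (by norm_cast)
  have hf2 : HasFDerivAt (fderiv ℝ v) (fderiv ℝ (fderiv ℝ v) x) x :=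
    (hf2'.differentiableAt one_ne_zero).hasFDerivAt
  set f'' := fderiv ℝ (fderiv ℝ v) x with hf''def
  have hsym : f'' (ee 0) (ee 1) = f'' (ee 1) (ee 0) :=
    second_derivative_symmetric_of_eventually_of_real hf1 hf2 (ee 0) (ee 1)
  have hpd : ∀ i, HasFDerivAt (pd i v) (f''.flip (ee i)) x := by
    intro i
    have h := hf2.clm_apply (hasFDerivAt_const (ee i) x)
    simp at h
    exact h
  have ha : ∀ j i, pd2 j i v x = f'' (ee j) (ee i) := by
    intro j i
    rw [pd2, pd, (hpd i).fderiv]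
    rfl
  set L0 := f''.flip (ee 0) with hL0
  set L1 := f''.flip (ee 1) with hL1
  have hqf : HasFDerivAt (fun y => gradSq v y + δ)
      ((2*(pd 0 v x)) • L0 + (2*(pd 1 v x)) • L1) x := by
    have h := (((hpd 0).mul (hpd 0)).add ((hpd 1).mul (hpd 1))).add_const δ
    have heqf : (fun y => pd 0 v y * pd 0 v y + pd 1 v y * pd 1 v y + δ)
        = (fun y => gradSq v y + δ) := by
      funext y; simp [gradSq]; ring
    simp only [Pi.add_apply, Pi.mul_apply] at h
    rw [heqf] at h
    refine h.congr_fderiv ?_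
    module
  set q := gradSq v x + δ with hqdef
  have hq0 : 0 < q := by
    have h0 : 0 ≤ gradSq v x := by unfold gradSq; positivity
    simp only [hqdef]; linarith
  have hrp : ∀ r : ℝ, HasFDerivAt (fun y => (gradSq v y + δ) ^ r)
      ((r * q ^ (r-1)) • ((2*(pd 0 v x)) • L0 + (2*(pd 1 v x)) • L1)) x := by
    intro r
    exact (Real.hasDerivAt_rpow_const (x := q) (p := r) (Or.inl hq0.ne')).comp_hasFDerivAt x hqf
  have hG : ∀ i : Fin 2, HasFDerivAt (fun y => (gradSq v y + δ) ^ (β/2) * pd i v y)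
      ((q ^ (β/2)) • (f''.flip (ee i)) +
        (pd i v x) • ((β/2 * q ^ (β/2-1)) • ((2*(pd 0 v x)) • L0 + (2*(pd 1 v x)) • L1))) x := by
    intro i
    exact (hrp (β/2)).mul (hpd i)
  have hval : ∀ j i : Fin 2, pd j (fun y => (gradSq v y + δ) ^ (β/2) * pd i v y) x
      = q ^ (β/2) * (f'' (ee j) (ee i))
        + pd i v x * ((β/2 * q ^ (β/2-1)) *
            (2*(pd 0 v x)*(f'' (ee j) (ee 0)) + 2*(pd 1 v x)*(f'' (ee j) (ee 1)))) := by
    intro j i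
    rw [pd, (hG i).fderiv]
    simp only [ContinuousLinearMap.add_apply, ContinuousLinearMap.coe_smul', Pi.smul_apply,
      ContinuousLinearMap.flip_apply, smul_eq_mul, hL0, hL1]
  have hvalA : ∀ j : Fin 2, pd j (fun y => (gradSq v y + δ) ^ ((β+1)/2)) x
      = ((β+1)/2 * q ^ ((β+1)/2-1)) *
          (2*(pd 0 v x)*(f'' (ee j) (ee 0)) + 2*(pd 1 v x)*(f'' (ee j) (ee 1))) := by
    intro j
    rw [pd, (hrp ((β+1)/2)).fderiv]
    simp only [ContinuousLinearMap.add_apply, ContinuousLinearMap.coe_smul', Pi.smul_apply,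
      ContinuousLinearMap.flip_apply, smul_eq_mul, hL0, hL1]
  have hs := heq x hx
  simp only [infLap, lap, ha] at hs
  simp only [jdet, infLap, ha]
  rw [hval 0 0, hval 1 1, hval 1 0, hval 0 1, hvalA 0, hvalA 1]
  rw [← hsym] at hs ⊢
  set P0 := pd 0 v x with hP0
  set P1 := pd 1 v x with hP1
  set b00 := f'' (ee 0) (ee 0) with hb00
  set b01 := f'' (ee 0) (ee 1) with hb01
  set b11 := f'' (ee 1) (ee 1) with hb11
  have hqval : q = P0^2 + P1^2 + δ := by rw [hqdef, hP0, hP1]; rfl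
  set g := q ^ ((β+1)/2-1) with hgdef
  set e := q ^ (β/2-1) with hedef
  set m := q ^ (β-1) with hmdef
  have hm0 : 0 < m := Real.rpow_pos_of_pos hq0 _
  have hg2 : g * g = m := by
    rw [hgdef, hmdef, ← Real.rpow_add hq0]; congr 1; ring
  have he2 : e * e * q = m := by
    rw [hedef, hmdef, ← Real.rpow_add hq0, ← Real.rpow_add_one hq0.ne']; congr 1; ring
  have hfq : q ^ (β/2) = e * q := by
    rw [hedef, ← Real.rpow_add_one hq0.ne']; congr 1; ring
  rw [hfq]
  have hb1 : (0:ℝ) < β + 1 := by linarith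
  set c := (β+1)/ε with hcdef
  have hc : c * ε = β + 1 := div_mul_cancel₀ _ hε.ne'
  have hd0 : b00*b11 - b01*b01 ≤ 0 :=
    aux_det_nonpos ε P0 P1 b00 b01 b11 hε (by linear_combination hs)
  have hidP : ε*((β+1)*((b00*P0+b01*P1)^2 + (b01*P0+b11*P1)^2)
        + c*(b00*P0*P0 + b01*P0*P1 + b01*P1*P0 + b11*P1*P1)^2
        + (β*((b00*P0+b01*P1)*P0*b11 + (b01*P0+b11*P1)*P1*b00
              - (b01*P0+b11*P1)*P0*b01 - (b00*P0+b01*P1)*P1*b01)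
           + q*(b00*b11-b01*b01)))
      = ε*(δ*(b00*b11-b01*b01)) := by
    linear_combination ((β+1)*(b00*P0*P0 + b01*P0*P1 + b01*P1*P0 + b11*P1*P1))*hs
      + (ε*(b00*b11-b01*b01))*hqval
      + ((b00*P0*P0 + b01*P0*P1 + b01*P1*P0 + b11*P1*P1)^2)*hc
  have hεδd : ε*(δ*(b00*b11-b01*b01)) ≤ 0 := by nlinarith [mul_pos hε hδ]
  have hP : (β+1)*((b00*P0+b01*P1)^2 + (b01*P0+b11*P1)^2)
        + c*(b00*P0*P0 + b01*P0*P1 + b01*P1*P0 + b11*P1*P1)^2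
        + (β*((b00*P0+b01*P1)*P0*b11 + (b01*P0+b11*P1)*P1*b00
              - (b01*P0+b11*P1)*P0*b01 - (b00*P0+b01*P1)*P1*b01)
           + q*(b00*b11-b01*b01)) ≤ 0 := by
    nlinarith [hidP, hεδd]
  have hLeq : (1/(β+1)) * ((((β+1)/2 * g) * (2*P0*b00 + 2*P1*b01))^2
        + (((β+1)/2 * g) * (2*P0*b01 + 2*P1*b11))^2)
      = m * ((β+1)*((b00*P0+b01*P1)^2 + (b01*P0+b11*P1)^2)) := by
    rw [← hg2]; field_simp
  have hReq : (e*q * b00 + P0 * ((β/2 * e) * (2*P0*b00 + 2*P1*b01)))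
        * (e*q * b11 + P1 * ((β/2 * e) * (2*P0*b01 + 2*P1*b11)))
      - (e*q * b01 + P0 * ((β/2 * e) * (2*P0*b01 + 2*P1*b11)))
        * (e*q * b01 + P1 * ((β/2 * e) * (2*P0*b00 + 2*P1*b01)))
      = m * (β*((b00*P0+b01*P1)*P0*b11 + (b01*P0+b11*P1)*P1*b00
              - (b01*P0+b11*P1)*P0*b01 - (b00*P0+b01*P1)*P1*b01)
           + q*(b00*b11-b01*b01)) := by
    rw [← he2]; ring
  rw [hLeq, hReq]
  linarith [mul_le_mul_of_nonneg_left hP hm0.le]
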